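/- Within a k × n rectangle (0 < k ≤ n integers), if a point c is joined by straight segments to q points p₁,…,p_q inside the rectangle so that the resulting straight-line drawing has minimum feature size at least 1 (every vertex is at distance at least 1 from every non-incident segment), then q ≤ C·k·(1 + log(n/k)) for some absolute constant C. -/

import Mathlib

open Real Metric

/-- The axis-aligned rectangle `[0,k] × [0,n]` as a subset of the Euclidean plane. -/
def rect (k n : ℝ) : Set (EuclideanSpace ℝ (Fin 2)) :=
  {p | p 0 ∈ Set.Icc 0 k ∧ p 1 ∈ Set.Icc 0 n}

lemma pack1D {ι : Type*} (s : Finset ι) (x : ι → ℝ) (a b d : ℝ)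
    (hd : 0 < d) (hab : a ≤ b)
    (hmem : ∀ i ∈ s, a ≤ x i ∧ x i ≤ b)
    (hsep : ∀ i ∈ s, ∀ j ∈ s, i ≠ j → d ≤ |x i - x j|) :
    (s.card : ℝ) ≤ (b - a) / d + 1 := by
  have hmap : ∀ i ∈ s, ⌊(x i - a)/d⌋ ∈ Finset.Icc (0:ℤ) ⌊(b-a)/d⌋ := by
    intro i hi
    obtain ⟨h1, h2⟩ := hmem i hi
    refine Finset.mem_Icc.mpr ⟨Int.floor_nonneg.mpr (div_nonneg (by linarith) hd.le), ?_⟩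
    exact Int.floor_le_floor (by gcongr <;> linarith)
  have hinj : Set.InjOn (fun i => ⌊(x i - a)/d⌋) s := by
    intro i hi j hj hij
    by_contra hne
    have h1 := Int.abs_sub_lt_one_of_floor_eq_floor hij
    have h2 := hsep i hi j hj hne
    have h3 : (x i - a)/d - (x j - a)/d = (x i - x j)/d := by ring
    rw [h3, abs_div, abs_of_pos hd, div_lt_one hd] at h1
    linarith
  have hcard := Finset.card_le_card_of_injOn _ hmap hinj
  have hfl0 : (0:ℤ) ≤ ⌊(b-a)/d⌋ := Int.floor_nonneg.mpr (div_nonneg (by linarith) hd.le)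
  have hcc : ((Finset.Icc (0:ℤ) ⌊(b-a)/d⌋).card : ℝ) = (⌊(b-a)/d⌋ : ℝ) + 1 := by
    rw [Int.card_Icc, sub_zero]
    have h4 := Int.toNat_of_nonneg (show (0:ℤ) ≤ ⌊(b-a)/d⌋ + 1 by omega)
    exact_mod_cast congrArg (fun z : ℤ => (z : ℝ)) h4
  have h5 : (s.card : ℝ) ≤ ((Finset.Icc (0:ℤ) ⌊(b-a)/d⌋).card : ℝ) := by exact_mod_cast hcard
  rw [hcc] at h5
  linarith [Int.floor_le ((b-a)/d)]

lemma chartReal {x1 y1 x2 y2 : ℝ} (h1 : x1^2+y1^2 = 1) (h2 : x2^2+y2^2 = 1)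
    (hy1 : 1/2 ≤ y1) (hy2 : 1/2 ≤ y2) : |y1 - y2| ≤ 2 * |x1 - x2| := by
  have hx1 : |x1| ≤ 1 := by
    rw [← sq_le_one_iff_abs_le_one]; nlinarith
  have hx2 : |x2| ≤ 1 := by
    rw [← sq_le_one_iff_abs_le_one]; nlinarith
  have key : (y1 - y2) * (y1 + y2) = (x2 - x1) * (x2 + x1) := by nlinarith
  have h6 : |y1 - y2| * (y1 + y2) = |x1 - x2| * |x2 + x1| := by
    rw [show |x1 - x2| = |x2 - x1| from abs_sub_comm _ _, ← abs_mul, ← key, abs_mul,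
      abs_of_pos (by linarith : (0:ℝ) < y1 + y2)]
  have h7 : |x2 + x1| ≤ 2 := (abs_add_le _ _).trans (by linarith)
  nlinarith [abs_nonneg (y1 - y2), abs_nonneg (x1 - x2)]

lemma classBound {ι : Type*} (s : Finset ι) (X Y : ι → ℝ) (w δ : ℝ)
    (hw : 0 ≤ w) (hδ : 0 < δ)
    (hunit : ∀ i ∈ s, X i ^ 2 + Y i ^ 2 = 1)
    (hY : ∀ i ∈ s, 1/2 ≤ Y i)
    (hX : ∀ i ∈ s, |X i| ≤ w)
    (hsep : ∀ i ∈ s, ∀ j ∈ s, i ≠ j → δ ≤ |X i - X j| + |Y i - Y j|) :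
    (s.card : ℝ) ≤ 6 * w / δ + 1 := by
  have h := pack1D s X (-w) w (δ/3) (by positivity) (by linarith)
    (fun i hi => abs_le.mp (hX i hi))
    (by
      intro i hi j hj hij
      have h1 := hsep i hi j hj hij
      have h2 := chartReal (hunit i hi) (hunit j hj) (hY i hi) (hY j hj)
      linarith)
  calc (s.card : ℝ) ≤ (w - (-w))/(δ/3) + 1 := h
    _ = 6 * w / δ + 1 := by field_simp; ring

lemma norm_le_l1 (w : EuclideanSpace ℝ (Fin 2)) : ‖w‖ ≤ |w 0| + |w 1| := by
  rw [EuclideanSpace.norm_eq]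
  have h : ∑ i, ‖w i‖^2 = |w 0|^2 + |w 1|^2 := by
    simp [Fin.sum_univ_two, Real.norm_eq_abs]
  rw [h]
  calc √(|w 0|^2 + |w 1|^2) ≤ √((|w 0| + |w 1|)^2) :=
        Real.sqrt_le_sqrt (by nlinarith [abs_nonneg (w 0), abs_nonneg (w 1)])
    _ = |w 0| + |w 1| := Real.sqrt_sq (by positivity)

lemma abs_coord_le (w : EuclideanSpace ℝ (Fin 2)) (i : Fin 2) : |w i| ≤ ‖w‖ := by
  rw [EuclideanSpace.norm_eq]
  have h : |w i|^2 ≤ ∑ j, ‖w j‖^2 := by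
    fin_cases i <;> simp [Fin.sum_univ_two, Real.norm_eq_abs] <;> nlinarith [sq_abs (w 0), sq_abs (w 1), sq_nonneg (w 0), sq_nonneg (w 1)]
  calc |w i| = √(|w i|^2) := (Real.sqrt_sq_eq_abs _).symm.trans (by rw [sq_abs, Real.sqrt_sq_eq_abs])
    _ ≤ _ := Real.sqrt_le_sqrt h

lemma unit_sq (u : EuclideanSpace ℝ (Fin 2)) (h : ‖u‖ = 1) : (u 0)^2 + (u 1)^2 = 1 := by
  rw [EuclideanSpace.norm_eq] at h
  have h2 : ∑ i, ‖u i‖^2 = (u 0)^2 + (u 1)^2 := by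
    simp [Fin.sum_univ_two, Real.norm_eq_abs, sq_abs]
  rw [h2] at h
  have := Real.sqrt_eq_one.mp h
  linarith [this]

set_option maxHeartbeats 3000000 in
/-- Within a `k × n` rectangle, if a point `c` is joined to `q` points so that the
resulting straight-line drawing has minimum feature size at least 1, then
`q ≤ C·k·(1 + log(n/k))` for an absolute constant `C`. -/
theorem stmt_10 :
    ∃ C : ℝ, 0 < C ∧ ∀ (k n : ℕ), 0 < k → k ≤ n →
      ∀ (q : ℕ) (c : EuclideanSpace ℝ (Fin 2)) (p : Fin q → EuclideanSpace ℝ (Fin 2)),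
        c ∈ rect k n → (∀ i, p i ∈ rect k n) →
        -- every vertex is at distance at least 1 from every non-incident segment:
        (∀ i j : Fin q, i ≠ j →
          1 ≤ infDist (p j) (segment ℝ c (p i))) →
        (q : ℝ) ≤ C * k * (1 + Real.log ((n : ℝ) / k)) := by
  refine ⟨1000, by norm_num, ?_⟩
  intro k n hk hkn q c p hc hp hfs
  have hk1 : (1:ℝ) ≤ k := by exact_mod_cast hk
  have hkpos : (0:ℝ) < k := by linarith
  have hkn' : (k:ℝ) ≤ n := by exact_mod_cast hkn
  have hlog : 0 ≤ Real.log ((n:ℝ)/k) := Real.log_nonneg (by rw [le_div_iff₀ hkpos]; linarith)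
  by_cases hq2 : q < 2
  · have hq1 : (q:ℝ) ≤ 1 := by exact_mod_cast Nat.lt_succ_iff.mp hq2
    nlinarith
  push_neg at hq2
  -- basic vectors
  set v : Fin q → EuclideanSpace ℝ (Fin 2) := fun i => p i - c with hv
  set r : Fin q → ℝ := fun i => ‖v i‖ with hrdef
  set u : Fin q → EuclideanSpace ℝ (Fin 2) := fun i => (r i)⁻¹ • v i with hudef
  have hr1 : ∀ i, 1 ≤ r i := by
    intro i
    obtain ⟨j, hj⟩ := Fintype.exists_ne_of_one_lt_card (by rw [Fintype.card_fin]; omega) i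
    have h1 := hfs j i hj
    have h2 : infDist (p i) (segment ℝ c (p j)) ≤ dist (p i) c :=
      infDist_le_dist_of_mem (left_mem_segment ℝ c (p j))
    have h3 : dist (p i) c = r i := by rw [dist_eq_norm]
    linarith
  have hrpos : ∀ i, 0 < r i := fun i => lt_of_lt_of_le one_pos (hr1 i)
  have hunorm : ∀ i, ‖u i‖ = 1 := by
    intro i
    rw [hudef]
    simp only [norm_smul, norm_inv, Real.norm_eq_abs, abs_of_pos (hrpos i)]
    exact inv_mul_cancel₀ (ne_of_gt (hrpos i))
  have hvu : ∀ i, r i • u i = v i := fun i => smul_inv_smul₀ (ne_of_gt (hrpos i)) _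
  -- key inequality
  have hkey : ∀ i j, i ≠ j → r j ≤ r i → 1 ≤ r j * ‖u j - u i‖ := by
    intro i j hij hle
    set t := r j / r i with htdef
    have ht0 : 0 ≤ t := div_nonneg (hrpos j).le (hrpos i).le
    have ht1 : t ≤ 1 := (div_le_one (hrpos i)).mpr hle
    have hmem : (1 - t) • c + t • p i ∈ segment ℝ c (p i) :=
      ⟨1 - t, t, by linarith, ht0, by ring, rfl⟩
    have h1 : 1 ≤ dist (p j) ((1-t) • c + t • p i) :=
      le_trans (hfs i j hij) (infDist_le_dist_of_mem hmem)
    have h2 : p j - ((1-t) • c + t • p i) = r j • (u j - u i) := by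
      have e2 : t • v i = r j • u i := by
        rw [← hvu i, smul_smul]
        congr 1
        rw [htdef]
        exact div_mul_cancel₀ _ (ne_of_gt (hrpos i))
      calc p j - ((1-t) • c + t • p i) = (p j - c) - t • (p i - c) := by module
        _ = v j - t • v i := rfl
        _ = r j • u j - r j • u i := by rw [hvu j, e2]
        _ = r j • (u j - u i) := (smul_sub _ _ _).symm
    rw [dist_eq_norm, h2, norm_smul, Real.norm_eq_abs, abs_of_pos (hrpos j)] at h1
    exact h1
  -- coordinate bounds
  have hvx : ∀ i, |v i 0| ≤ k := by
    intro i
    have h1 := (hp i).1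
    have h2 := hc.1
    simp only [Set.mem_Icc] at h1 h2
    have : v i 0 = p i 0 - c 0 := rfl
    rw [this, abs_le]
    constructor <;> linarith [h1.1, h1.2, h2.1, h2.2]
  have hvy : ∀ i, |v i 1| ≤ n := by
    intro i
    have h1 := (hp i).2
    have h2 := hc.2
    simp only [Set.mem_Icc] at h1 h2
    have : v i 1 = p i 1 - c 1 := rfl
    rw [this, abs_le]
    constructor <;> linarith [h1.1, h1.2, h2.1, h2.2]
  have hr2n : ∀ i, r i ≤ 2 * n := by
    intro i
    calc r i ≤ |v i 0| + |v i 1| := norm_le_l1 (v i)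
      _ ≤ k + n := add_le_add (hvx i) (hvy i)
      _ ≤ 2 * n := by linarith
  -- annulus index
  set mF : Fin q → ℕ := fun i => Nat.log 2 ⌊r i⌋₊ with hmF
  have hfloor1 : ∀ i, 1 ≤ ⌊r i⌋₊ := fun i => Nat.le_floor (by exact_mod_cast hr1 i)
  have hml : ∀ i, (2:ℝ)^(mF i) ≤ r i := by
    intro i
    calc (2:ℝ)^(mF i) = ((2^(mF i) : ℕ) : ℝ) := by push_cast; ring
      _ ≤ (⌊r i⌋₊ : ℝ) := by
          exact_mod_cast Nat.pow_log_le_self 2 (by have := hfloor1 i; omega : ⌊r i⌋₊ ≠ 0)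
      _ ≤ r i := Nat.floor_le (le_trans zero_le_one (hr1 i))
  have hmu : ∀ i, r i < 2^(mF i + 1) := by
    intro i
    have h1 : ⌊r i⌋₊ + 1 ≤ 2^(mF i + 1) := Nat.lt_pow_succ_log_self one_lt_two _
    calc r i < ⌊r i⌋₊ + 1 := Nat.lt_floor_add_one _
      _ ≤ (2:ℝ)^(mF i + 1) := by exact_mod_cast h1
  set L : ℕ := Nat.log 2 (2*n) with hL
  set M : ℕ := L + 1 with hM
  have hMlt : ∀ i, mF i < M := by
    intro i
    have h1 : (2:ℕ)^(mF i) ≤ 2*n := by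
      have h2 : (2:ℝ)^(mF i) ≤ 2*(n:ℝ) := le_trans (hml i) (hr2n i)
      exact_mod_cast h2
    have h2 : 2*n < 2^M := Nat.lt_pow_succ_log_self one_lt_two _
    exact (Nat.pow_lt_pow_iff_right one_lt_two).mp (lt_of_le_of_lt h1 h2)
  -- annuli
  set S : ℕ → Finset (Fin q) := fun m => Finset.univ.filter (fun i => mF i = m) with hS
  have hSr : ∀ m, ∀ i ∈ S m, (2:ℝ)^m ≤ r i ∧ r i < 2^(m+1) := by
    intro m i hi
    rw [hS, Finset.mem_filter] at hi
    exact hi.2 ▸ ⟨hml i, hmu i⟩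
  have hAsep : ∀ m, ∀ i ∈ S m, ∀ j ∈ S m, i ≠ j → ((2:ℝ)^(m+1))⁻¹ ≤ ‖u i - u j‖ := by
    intro m i hi j hj hij
    have h2pos : (0:ℝ) < 2^(m+1) := by positivity
    have key : ∀ a b : Fin q, a ≠ b → a ∈ S m → b ∈ S m → r b ≤ r a →
        ((2:ℝ)^(m+1))⁻¹ ≤ ‖u b - u a‖ := by
      intro a b hab ha hb hle
      have h1 := hkey a b hab hle
      have h2 : r b ≤ 2^(m+1) := le_of_lt (hSr m b hb).2
      have hn0 : 0 ≤ ‖u b - u a‖ := norm_nonneg _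
      rw [inv_eq_one_div, div_le_iff₀ h2pos]
      nlinarith [hrpos b]
    rcases le_total (r j) (r i) with h | h
    · rw [norm_sub_rev]; exact key i j hij hi hj h
    · exact key j i hij.symm hj hi h
  have hux : ∀ i, |u i 0| ≤ k / r i := by
    intro i
    have : u i 0 = (r i)⁻¹ * v i 0 := rfl
    calc |u i 0| = (r i)⁻¹ * |v i 0| := by
          rw [this, abs_mul, abs_of_pos (inv_pos.mpr (hrpos i))]
      _ ≤ (r i)⁻¹ * k := mul_le_mul_of_nonneg_left (hvx i) (inv_pos.mpr (hrpos i)).le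
      _ = k / r i := by rw [inv_mul_eq_div]
  have hin1 : ∀ i, |u i 0| ≤ 1 := fun i => (abs_coord_le (u i) 0).trans (le_of_eq (hunorm i))
  have huId : ∀ i, (u i 0)^2 + (u i 1)^2 = 1 := fun i => unit_sq (u i) (hunorm i)
  -- per annulus bound
  set g : ℕ → ℝ := fun m => if (2:ℝ)^m ≤ 4*k then 48*2^m + 4 else 24*k + 2 with hg
  have hcard : ∀ m, ((S m).card : ℝ) ≤ g m := by
    intro m
    have h2m : (0:ℝ) < 2^m := by positivity
    have h2m1 : (0:ℝ) < 2^(m+1) := by positivity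
    set δ : ℝ := ((2:ℝ)^(m+1))⁻¹ with hδdef
    have hδ : 0 < δ := by positivity
    have hsepC : ∀ i ∈ S m, ∀ j ∈ S m, i ≠ j →
        δ ≤ |u i 0 - u j 0| + |u i 1 - u j 1| := by
      intro i hi j hj hij
      have h1 := hAsep m i hi j hj hij
      have h2 := norm_le_l1 (u i - u j)
      have e0 : (u i - u j) 0 = u i 0 - u j 0 := rfl
      have e1 : (u i - u j) 1 = u i 1 - u j 1 := rfl
      rw [e0, e1] at h2
      exact le_trans h1 h2
    have hcover : (S m).card ≤
        ((S m).filter (fun i => 1/2 ≤ u i 1)).card + ((S m).filter (fun i => u i 1 ≤ -(1/2))).card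
        + (((S m).filter (fun i => 1/2 ≤ u i 0)).card + ((S m).filter (fun i => u i 0 ≤ -(1/2))).card) := by
      have hsub : S m ⊆ (((S m).filter (fun i => 1/2 ≤ u i 1)) ∪ ((S m).filter (fun i => u i 1 ≤ -(1/2))))
          ∪ (((S m).filter (fun i => 1/2 ≤ u i 0)) ∪ ((S m).filter (fun i => u i 0 ≤ -(1/2)))) := by
        intro i hi
        have h1 : (1:ℝ) ≤ |u i 0| + |u i 1| := by
          have h2 := norm_le_l1 (u i); rw [hunorm i] at h2; exact h2
        simp only [Finset.mem_union, Finset.mem_filter]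
        have hcase : 1/2 ≤ |u i 0| ∨ 1/2 ≤ |u i 1| := by
          rcases le_total (|u i 0|) (|u i 1|) with h | h
          · right; linarith
          · left; linarith
        rcases hcase with h | h
        · right
          rcases abs_cases (u i 0) with ⟨he, h0⟩ | ⟨he, h0⟩
          · left; exact ⟨hi, by linarith [he ▸ h]⟩
          · right; exact ⟨hi, by linarith [he ▸ h]⟩
        · left
          rcases abs_cases (u i 1) with ⟨he, h0⟩ | ⟨he, h0⟩
          · left; exact ⟨hi, by linarith [he ▸ h]⟩
          · right; exact ⟨hi, by linarith [he ▸ h]⟩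
      calc (S m).card ≤ _ := Finset.card_le_card hsub
        _ ≤ _ := Finset.card_union_le _ _
        _ ≤ _ := add_le_add (Finset.card_union_le _ _) (Finset.card_union_le _ _)
    by_cases hsmall : (2:ℝ)^m ≤ 4*(k:ℝ)
    · rw [hg]
      beta_reduce
      rw [if_pos hsmall]
      have c1 : ((((S m).filter (fun i => 1/2 ≤ u i 1)).card : ℕ) : ℝ) ≤ 6*1/δ + 1 :=
        classBound _ (fun i => u i 0) (fun i => u i 1) 1 δ zero_le_one hδ
          (fun i _ => huId i)
          (fun i hi => (Finset.mem_filter.mp hi).2)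
          (fun i _ => hin1 i)
          (fun i hi j hj hij => hsepC i (Finset.mem_filter.mp hi).1 j (Finset.mem_filter.mp hj).1 hij)
      have c2 : ((((S m).filter (fun i => u i 1 ≤ -(1/2))).card : ℕ) : ℝ) ≤ 6*1/δ + 1 :=
        classBound _ (fun i => u i 0) (fun i => -(u i 1)) 1 δ zero_le_one hδ
          (fun i _ => by simp only [neg_sq]; exact huId i)
          (fun i hi => by have := (Finset.mem_filter.mp hi).2; linarith)
          (fun i _ => hin1 i)
          (fun i hi j hj hij => by
            have h1 := hsepC i (Finset.mem_filter.mp hi).1 j (Finset.mem_filter.mp hj).1 hij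
            have h2 : |(-(u i 1)) - (-(u j 1))| = |u i 1 - u j 1| := by
              rw [show (-(u i 1)) - (-(u j 1)) = -(u i 1 - u j 1) by ring, abs_neg]
            rw [h2]; exact h1)
      have c3 : ((((S m).filter (fun i => 1/2 ≤ u i 0)).card : ℕ) : ℝ) ≤ 6*1/δ + 1 :=
        classBound _ (fun i => u i 1) (fun i => u i 0) 1 δ zero_le_one hδ
          (fun i _ => by have := huId i; linarith)
          (fun i hi => (Finset.mem_filter.mp hi).2)
          (fun i _ => (abs_coord_le (u i) 1).trans (le_of_eq (hunorm i)))
          (fun i hi j hj hij => by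
            rw [add_comm]
            exact hsepC i (Finset.mem_filter.mp hi).1 j (Finset.mem_filter.mp hj).1 hij)
      have c4 : ((((S m).filter (fun i => u i 0 ≤ -(1/2))).card : ℕ) : ℝ) ≤ 6*1/δ + 1 :=
        classBound _ (fun i => u i 1) (fun i => -(u i 0)) 1 δ zero_le_one hδ
          (fun i _ => by have := huId i; simp only [neg_sq]; linarith)
          (fun i hi => by have := (Finset.mem_filter.mp hi).2; linarith)
          (fun i _ => (abs_coord_le (u i) 1).trans (le_of_eq (hunorm i)))
          (fun i hi j hj hij => by
            have h1 := hsepC i (Finset.mem_filter.mp hi).1 j (Finset.mem_filter.mp hj).1 hij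
            have h2 : |(-(u i 0)) - (-(u j 0))| = |u i 0 - u j 0| := by
              rw [show (-(u i 0)) - (-(u j 0)) = -(u i 0 - u j 0) by ring, abs_neg]
            rw [h2, add_comm]; exact h1)
      have heq : 6*1/δ + 1 = 12*2^m + 1 := by
        rw [hδdef, mul_one, div_eq_mul_inv, inv_inv, pow_succ]; ring
      rw [heq] at c1 c2 c3 c4
      have hcover' : ((S m).card : ℝ) ≤
          ((((S m).filter (fun i => 1/2 ≤ u i 1)).card : ℕ) : ℝ)
          + ((((S m).filter (fun i => u i 1 ≤ -(1/2))).card : ℕ) : ℝ)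
          + (((((S m).filter (fun i => 1/2 ≤ u i 0)).card : ℕ) : ℝ)
          + ((((S m).filter (fun i => u i 0 ≤ -(1/2))).card : ℕ) : ℝ)) := by
        exact_mod_cast hcover
      linarith
    · rw [hg]
      beta_reduce
      rw [if_neg hsmall]
      push_neg at hsmall
      have hwpos : (0:ℝ) ≤ k/2^m := by positivity
      have hXw : ∀ i ∈ S m, |u i 0| ≤ k/2^m := by
        intro i hi
        calc |u i 0| ≤ (k:ℝ) / r i := hux i
          _ ≤ k / 2^m := by
              apply div_le_div_of_nonneg_left hkpos.le h2m (hSr m i hi).1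
      have hksmall : (k:ℝ)/2^m < 1/2 := by
        rw [div_lt_iff₀ h2m]; linarith
      have c1 : ((((S m).filter (fun i => 1/2 ≤ u i 1)).card : ℕ) : ℝ) ≤ 6*((k:ℝ)/2^m)/δ + 1 :=
        classBound _ (fun i => u i 0) (fun i => u i 1) ((k:ℝ)/2^m) δ hwpos hδ
          (fun i _ => huId i)
          (fun i hi => (Finset.mem_filter.mp hi).2)
          (fun i hi => hXw i (Finset.mem_filter.mp hi).1)
          (fun i hi j hj hij => hsepC i (Finset.mem_filter.mp hi).1 j (Finset.mem_filter.mp hj).1 hij)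
      have c2 : ((((S m).filter (fun i => u i 1 ≤ -(1/2))).card : ℕ) : ℝ) ≤ 6*((k:ℝ)/2^m)/δ + 1 :=
        classBound _ (fun i => u i 0) (fun i => -(u i 1)) ((k:ℝ)/2^m) δ hwpos hδ
          (fun i _ => by simp only [neg_sq]; exact huId i)
          (fun i hi => by have := (Finset.mem_filter.mp hi).2; linarith)
          (fun i hi => hXw i (Finset.mem_filter.mp hi).1)
          (fun i hi j hj hij => by
            have h1 := hsepC i (Finset.mem_filter.mp hi).1 j (Finset.mem_filter.mp hj).1 hij
            have h2 : |(-(u i 1)) - (-(u j 1))| = |u i 1 - u j 1| := by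
              rw [show (-(u i 1)) - (-(u j 1)) = -(u i 1 - u j 1) by ring, abs_neg]
            rw [h2]; exact h1)
      have c3 : ((S m).filter (fun i => 1/2 ≤ u i 0)).card = 0 := by
        rw [Finset.card_eq_zero, Finset.filter_eq_empty_iff]
        intro i hi hcon
        have h1 := hXw i hi
        have h2 := le_abs_self (u i 0)
        linarith
      have c4 : ((S m).filter (fun i => u i 0 ≤ -(1/2))).card = 0 := by
        rw [Finset.card_eq_zero, Finset.filter_eq_empty_iff]
        intro i hi hcon
        have h1 := hXw i hi
        have h2 := neg_abs_le (u i 0)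
        linarith
      have heq : 6*((k:ℝ)/2^m)/δ + 1 = 12*k + 1 := by
        rw [hδdef, div_eq_mul_inv, inv_inv, pow_succ]
        field_simp
        ring
      rw [heq] at c1 c2
      have hcover' : ((S m).card : ℝ) ≤
          ((((S m).filter (fun i => 1/2 ≤ u i 1)).card : ℕ) : ℝ)
          + ((((S m).filter (fun i => u i 1 ≤ -(1/2))).card : ℕ) : ℝ)
          + (((((S m).filter (fun i => 1/2 ≤ u i 0)).card : ℕ) : ℝ)
          + ((((S m).filter (fun i => u i 0 ≤ -(1/2))).card : ℕ) : ℝ)) := by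
        exact_mod_cast hcover
      rw [c3, c4] at hcover'
      simp at hcover'
      linarith
  -- global sum
  have hqsum : (q:ℝ) ≤ ∑ m ∈ Finset.range M, ((S m).card : ℝ) := by
    have hsub : (Finset.univ : Finset (Fin q)) ⊆ (Finset.range M).biUnion S := by
      intro i _
      rw [Finset.mem_biUnion]
      exact ⟨mF i, Finset.mem_range.mpr (hMlt i), by rw [hS]; simp⟩
    have h1 : q ≤ ((Finset.range M).biUnion S).card := by
      calc q = (Finset.univ : Finset (Fin q)).card := by simp
        _ ≤ _ := Finset.card_le_card hsub
    have h2 : q ≤ ∑ m ∈ Finset.range M, (S m).card :=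
      le_trans h1 (Finset.card_biUnion_le)
    exact_mod_cast h2
  have hqg : (q:ℝ) ≤ ∑ m ∈ Finset.range M, g m :=
    le_trans hqsum (Finset.sum_le_sum fun m _ => hcard m)
  set L1 : ℕ := Nat.log 2 (4*k) with hL1
  rw [← Finset.sum_filter_add_sum_filter_not (Finset.range M) (fun m => (2:ℝ)^m ≤ 4*(k:ℝ)) g] at hqg
  have hsub1 : (Finset.range M).filter (fun m => (2:ℝ)^m ≤ 4*(k:ℝ)) ⊆ Finset.range (L1+1) := by
    intro m hm
    rw [Finset.mem_filter] at hm
    have h1 : (2:ℕ)^m ≤ 4*k := by exact_mod_cast hm.2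
    have h2 : m ≤ L1 := (Nat.le_log_iff_pow_le one_lt_two (by omega)).mpr h1
    exact Finset.mem_range.mpr (by omega)
  have hpart1 : ∑ m ∈ (Finset.range M).filter (fun m => (2:ℝ)^m ≤ 4*(k:ℝ)), g m ≤ 400*k := by
    have he : ∀ m ∈ (Finset.range M).filter (fun m => (2:ℝ)^m ≤ 4*(k:ℝ)), g m = 48*2^m+4 := by
      intro m hm; rw [hg]; exact if_pos (Finset.mem_filter.mp hm).2
    calc ∑ m ∈ (Finset.range M).filter (fun m => (2:ℝ)^m ≤ 4*(k:ℝ)), g m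
        = ∑ m ∈ (Finset.range M).filter (fun m => (2:ℝ)^m ≤ 4*(k:ℝ)), (48*(2:ℝ)^m+4) :=
          Finset.sum_congr rfl he
      _ ≤ ∑ m ∈ Finset.range (L1+1), (48*(2:ℝ)^m+4) :=
          Finset.sum_le_sum_of_subset_of_nonneg hsub1 (fun m _ _ => by positivity)
      _ = 48*((2:ℝ)^(L1+1)-1) + 4*(L1+1) := by
          rw [Finset.sum_add_distrib, ← Finset.mul_sum, geom_sum_eq (by norm_num : (2:ℝ) ≠ 1)]
          simp
          ring
      _ ≤ 400*k := by
          have h1 : (2:ℝ)^L1 ≤ 4*k := by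
            have h0 : (2:ℕ)^L1 ≤ 4*k := Nat.pow_log_le_self 2 (by omega)
            exact_mod_cast h0
          have h2 : (L1:ℝ) < 4*k := by
            have h3 : L1 < 2^L1 := Nat.lt_two_pow_self
            have h4 : (L1:ℝ) < (2:ℝ)^L1 := by exact_mod_cast h3
            linarith
          have h5 : (2:ℝ)^(L1+1) = 2*2^L1 := by rw [pow_succ]; ring
          nlinarith
  have hsub2 : (Finset.range M).filter (fun m => ¬ ((2:ℝ)^m ≤ 4*(k:ℝ))) ⊆ Finset.Ico (L1+1) M := by
    intro m hm
    rw [Finset.mem_filter, Finset.mem_range] at hm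
    refine Finset.mem_Ico.mpr ⟨?_, hm.1⟩
    by_contra hcon
    push_neg at hcon
    have h1 : (2:ℕ)^m ≤ 4*k :=
      le_trans (Nat.pow_le_pow_right (by norm_num) (by omega)) (Nat.pow_log_le_self 2 (by omega))
    exact hm.2 (by exact_mod_cast h1)
  set D : ℕ := M - (L1+1) with hD
  have hpart2 : ∑ m ∈ (Finset.range M).filter (fun m => ¬ ((2:ℝ)^m ≤ 4*(k:ℝ))), g m
      ≤ (D:ℝ)*(24*k+2) := by
    have he : ∀ m ∈ (Finset.range M).filter (fun m => ¬ ((2:ℝ)^m ≤ 4*(k:ℝ))), g m = 24*k+2 := by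
      intro m hm; rw [hg]; exact if_neg (Finset.mem_filter.mp hm).2
    have hcd : ((Finset.range M).filter (fun m => ¬ ((2:ℝ)^m ≤ 4*(k:ℝ)))).card ≤ D := by
      calc _ ≤ (Finset.Ico (L1+1) M).card := Finset.card_le_card hsub2
        _ = M - (L1+1) := Nat.card_Ico _ _
    calc ∑ m ∈ (Finset.range M).filter (fun m => ¬ ((2:ℝ)^m ≤ 4*(k:ℝ))), g m
        = ∑ _m ∈ (Finset.range M).filter (fun m => ¬ ((2:ℝ)^m ≤ 4*(k:ℝ))), (24*(k:ℝ)+2) :=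
          Finset.sum_congr rfl he
      _ = (((Finset.range M).filter (fun m => ¬ ((2:ℝ)^m ≤ 4*(k:ℝ)))).card : ℝ) * (24*k+2) := by
          rw [Finset.sum_const, nsmul_eq_mul]
      _ ≤ (D:ℝ)*(24*k+2) := by
          have : (((Finset.range M).filter (fun m => ¬ ((2:ℝ)^m ≤ 4*(k:ℝ)))).card : ℝ) ≤ (D:ℝ) := by
            exact_mod_cast hcd
          nlinarith
  have hDlog : (D:ℝ) ≤ 2*Real.log ((n:ℝ)/k) := by
    rcases Nat.eq_zero_or_pos D with h0 | hDpos
    · rw [h0]; simp; linarith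
    · have hLL : L1 + D = L := by omega
      have h2L : (2:ℕ)^L ≤ 2*n := Nat.pow_log_le_self 2 (by omega)
      have h2L1 : 2*k < 2^L1 := by
        have h6 : 4*k < 2^(L1+1) := by rw [hL1]; exact Nat.lt_pow_succ_log_self one_lt_two _
        have h7 : (2:ℕ)^(L1+1) = 2*2^L1 := by rw [pow_succ]; ring
        omega
      have hfrac : (2:ℝ)^D ≤ (n:ℝ)/k := by
        have h1 : (2:ℕ)^L1 * 2^D = 2^L := by rw [← pow_add, hLL]
        have h2 : (2:ℕ)^D * (2*k) ≤ 2*n := by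
          calc (2:ℕ)^D * (2*k) ≤ 2^D * 2^L1 := Nat.mul_le_mul_left _ (le_of_lt h2L1)
            _ = 2^L := by rw [mul_comm]; exact h1
            _ ≤ 2*n := h2L
        have h3 : (2:ℝ)^D * (2*k) ≤ 2*n := by exact_mod_cast h2
        rw [le_div_iff₀ hkpos]
        linarith
      have h4 : (D:ℝ)*Real.log 2 ≤ Real.log ((n:ℝ)/k) := by
        have h5 := Real.log_le_log (by positivity) hfrac
        rwa [Real.log_pow] at h5
      have h5 : (0.6931471803:ℝ) < Real.log 2 := Real.log_two_gt_d9
      have h6 : (0:ℝ) ≤ (D:ℝ) := Nat.cast_nonneg _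
      nlinarith
  have hfin : (q:ℝ) ≤ 400*k + (2*Real.log ((n:ℝ)/k))*(24*k+2) := by
    have h1 : (D:ℝ)*(24*k+2) ≤ (2*Real.log ((n:ℝ)/k))*(24*k+2) := by nlinarith
    linarith
  nlinarith
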